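/- Let q, n be positive natural numbers and η > 0. There exist square matrices Q, K, V, P of size (q+1)×(q+1) with the following property. For all training pairs (z_i, y_i) ∈ ℝ^q × ℝ (i = 1, ..., n) encoded as context tokens x_i = (z_i, y_i) ∈ ℝ^{q+1}, and for every query embedding z ∈ ℝ^q encoded as query token x̃ = (z, 0) ∈ ℝ^{q+1}, the linear-attention output out(x̃) = x̃ + P · ( Σ_{i=1}^n ⟨Q x̃, K x_i⟩ · (V x_i) ) has last coordinate equal to (η/n) · Σ_{i=1}^n y_i · ⟨z_i, z⟩, which is the prediction ⟨w^(1), z⟩ of one step of gradient descent with step size η on the squared loss ℓ(w) = (1/(2n)) · Σ_{i=1}^n (⟨w, z_i⟩ - y_i)^2 initialized at w^(0) = 0. -/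

import Mathlib

open Matrix

open InnerProductSpace in
lemma grad_aux {q n : ℕ} (z : Fin n → EuclideanSpace ℝ (Fin q)) (y : Fin n → ℝ) :
    HasGradientAt
      (fun w : EuclideanSpace ℝ (Fin q) =>
        (1 / (2 * (n : ℝ))) * ∑ i, ((inner ℝ w (z i) : ℝ) - y i) ^ 2)
      (∑ i, (-(y i) / n) • z i) 0 := by
  rw [hasGradientAt_iff_hasFDerivAt]
  have h : HasFDerivAt
      (fun w : EuclideanSpace ℝ (Fin q) =>
        (1 / (2 * (n : ℝ))) * ∑ i, ((inner ℝ w (z i) : ℝ) - y i) ^ 2)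
      ((1 / (2 * (n : ℝ))) • ∑ i, (2 * (0 - y i)) • (innerSL ℝ (z i))) 0 := by
    apply HasFDerivAt.const_mul
    apply HasFDerivAt.fun_sum
    intro i _
    have h1 : HasFDerivAt (fun w : EuclideanSpace ℝ (Fin q) => (inner ℝ w (z i) : ℝ) - y i)
        (innerSL ℝ (z i)) 0 := by
      have he : (fun w : EuclideanSpace ℝ (Fin q) => (inner ℝ w (z i) : ℝ) - y i)
          = fun w => (inner ℝ (z i) w : ℝ) - y i := by
        funext w; rw [real_inner_comm]
      rw [he]
      exact ((innerSL ℝ (z i)).hasFDerivAt).sub_const (y i)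
    have h2 := h1.mul h1
    convert h2 using 1
    · rfl
    · funext w; simp only [Pi.mul_apply]; ring
    · ext v
      simp [inner_zero_left]
      ring
  convert h using 1
  · rfl
  · rfl
  ext v
  simp [inner_sum, inner_smul_left, Finset.mul_sum]
  rw [← Finset.sum_neg_distrib]
  refine Finset.sum_congr rfl fun x _ => ?_
  ring

/-- There exist matrices `Q, K, V, P` of size `(q+1)×(q+1)` such that
for all training pairs `(zᵢ, yᵢ)` encoded as context tokens `xᵢ = (zᵢ, yᵢ)` and every
query embedding `z` encoded as `x̃ = (z, 0)`, the linear-attention output has last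
coordinate `(η/n) Σᵢ yᵢ ⟨zᵢ, z⟩`, which equals the prediction `⟨w⁽¹⁾, z⟩` of one step
of gradient descent on the squared loss initialized at `w⁽⁰⁾ = 0`. -/
theorem linear_attention_one_step_gd
    (q n : ℕ) (hq : 0 < q) (hn : 0 < n) (η : ℝ) (hη : 0 < η) :
    ∃ Q K V P : Matrix (Fin (q + 1)) (Fin (q + 1)) ℝ,
      ∀ (z : Fin n → EuclideanSpace ℝ (Fin q)) (y : Fin n → ℝ)
        (zq : EuclideanSpace ℝ (Fin q)),
        let x : Fin n → (Fin (q + 1) → ℝ) := fun i => Fin.snoc (fun j => z i j) (y i)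
        let xq : Fin (q + 1) → ℝ := Fin.snoc (fun j => zq j) 0
        let out : Fin (q + 1) → ℝ :=
          xq + P.mulVec (∑ i, ((Q.mulVec xq) ⬝ᵥ (K.mulVec (x i))) • (V.mulVec (x i)))
        out (Fin.last q) = (η / n) * ∑ i, y i * (inner ℝ (z i) zq : ℝ) ∧
        out (Fin.last q) =
          (inner ℝ ((0 : EuclideanSpace ℝ (Fin q)) - η • gradient
            (fun w : EuclideanSpace ℝ (Fin q) =>
              (1 / (2 * (n : ℝ))) * ∑ i, ((inner ℝ w (z i) : ℝ) - y i) ^ 2)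
            (0 : EuclideanSpace ℝ (Fin q))) zq : ℝ) := by
  refine ⟨1, Matrix.diagonal (fun j => if j = Fin.last q then 0 else 1),
    Matrix.diagonal (fun j => if j = Fin.last q then 1 else 0),
    (η / n) • Matrix.diagonal (fun j => if j = Fin.last q then 1 else 0), ?_⟩
  intro z y zq x xq out
  have key : out (Fin.last q) = (η / n) * ∑ i, y i * (inner ℝ (z i) zq : ℝ) := by
    show xq (Fin.last q) + _ = _
    have hxq : xq (Fin.last q) = 0 := by simp [xq, Fin.snoc]
    rw [hxq, zero_add]
    rw [Matrix.smul_mulVec]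
    have hdiagv : ∀ v : Fin (q+1) → ℝ,
        (Matrix.diagonal (fun j => if j = Fin.last q then (1:ℝ) else 0)).mulVec v (Fin.last q)
          = v (Fin.last q) := by
      intro v; simp [Matrix.mulVec_diagonal]
    simp only [Pi.smul_apply, hdiagv, smul_eq_mul]
    congr 1
    rw [Finset.sum_apply]
    refine Finset.sum_congr rfl fun i _ => ?_
    rw [Pi.smul_apply, smul_eq_mul]
    have hV : ((Matrix.diagonal (fun j => if j = Fin.last q then (1:ℝ) else 0)).mulVec (x i))
        (Fin.last q) = y i := by
      rw [hdiagv]; simp [x]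
    have hdot : ((1 : Matrix (Fin (q+1)) (Fin (q+1)) ℝ).mulVec xq) ⬝ᵥ
        ((Matrix.diagonal (fun j => if j = Fin.last q then (0:ℝ) else 1)).mulVec (x i))
        = (inner ℝ (z i) zq : ℝ) := by
      rw [Matrix.one_mulVec, dotProduct, Fin.sum_univ_castSucc]
      simp only [Matrix.mulVec_diagonal, xq, x, Fin.snoc_castSucc, Fin.snoc_last]
      rw [zero_mul, add_zero]
      simp only [zero_mul, mul_zero, add_zero, PiLp.inner_apply, RCLike.inner_apply,
        starRingEnd_apply, star_trivial]
      refine Finset.sum_congr rfl fun j _ => ?_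
      rw [if_neg (Fin.castSucc_lt_last j).ne]
      ring
    rw [hdot, hV, mul_comm]
  refine ⟨key, ?_⟩
  rw [key, (grad_aux z y).gradient]
  rw [inner_sub_left, inner_zero_left, real_inner_smul_left, sum_inner]
  simp only [real_inner_smul_left]
  rw [zero_sub, Finset.mul_sum, Finset.mul_sum, ← Finset.sum_neg_distrib]
  refine Finset.sum_congr rfl fun i _ => ?_
  ring
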